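/- The Crank-Nicolson scheme u^{n+1} = u^n - Δt·ũ^{n+1/2}·D u^{n+1/2} - Δt·𝔻^α(D u^{n+1/2}), with u^{n+1/2} = (u^n + u^{n+1})/2 and ũ(j) = (u(j+1)+u(j)+u(j-1))/3, is L²-conservative: any solution u^{n+1} ∈ ℓ²(ℤ) satisfies ‖u^{n+1}‖ = ‖u^n‖ in the scaled ℓ² norm. -/
import Mathlib

set_option maxHeartbeats 1000000

/-- Discrete fractional Laplacian. -/
noncomputable def fracLap (cα α dx : ℝ) (u : ℤ → ℝ) (j : ℤ) : ℝ :=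
  (cα / dx ^ α) * ∑' k : {k : ℤ // k ≠ j},
    (u k - u j) * (1 - (-1 : ℝ) ^ (j - (k : ℤ))) / ((|(k : ℤ) - j| : ℤ) : ℝ) ^ (1 + α)

/-- Central difference operator. -/
noncomputable def Dc (dx : ℝ) (v : ℤ → ℝ) (j : ℤ) : ℝ := (v (j + 1) - v (j - 1)) / (2 * dx)

/-- Three-point average ũ(j) = (u(j+1)+u(j)+u(j-1))/3. -/
noncomputable def tilde (u : ℤ → ℝ) (j : ℤ) : ℝ := (u (j + 1) + u j + u (j - 1)) / 3

namespace CNaux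

/-- Translation equivalence `j ↦ j + c` of `ℤ`. -/
def shiftE (c : ℤ) : ℤ ≃ ℤ :=
  ⟨fun j => j + c, fun j => j - c, fun j => by show j + c - c = j; omega,
   fun j => by show j - c + c = j; omega⟩

/-- Translation equivalence `j ↦ j - c` of `ℤ`. -/
def subE (c : ℤ) : ℤ ≃ ℤ :=
  ⟨fun j => j - c, fun j => j + c, fun j => by show j - c + c = j; omega,
   fun j => by show j + c - c = j; omega⟩

lemma summable_shift {f : ℤ → ℝ} (hf : Summable f) (c : ℤ) :
    Summable fun j : ℤ => f (j + c) :=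
  ((shiftE c).summable_iff (f := f)).mpr hf

lemma summable_sub_shift {f : ℤ → ℝ} (hf : Summable f) (c : ℤ) :
    Summable fun j : ℤ => f (j - c) :=
  ((subE c).summable_iff (f := f)).mpr hf

lemma tsum_add_shift (f : ℤ → ℝ) (c : ℤ) : ∑' j : ℤ, f (j + c) = ∑' j : ℤ, f j :=
  (shiftE c).tsum_eq f

lemma tsum_sub_shift (f : ℤ → ℝ) (c : ℤ) : ∑' j : ℤ, f (j - c) = ∑' j : ℤ, f j :=
  (subE c).tsum_eq f

/-- The convolution kernel as a function of the difference of indices. -/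
noncomputable def Kk (α : ℝ) (m : ℤ) : ℝ := (1 - (-1 : ℝ) ^ m) / ((|m| : ℤ) : ℝ) ^ (1 + α)

lemma neg_one_zpow_inv (m : ℤ) : ((-1 : ℝ) ^ m)⁻¹ = (-1 : ℝ) ^ m := by
  rcases Int.even_or_odd m with h | h
  · rw [h.neg_one_zpow, inv_one]
  · rw [h.neg_one_zpow]; norm_num

lemma Kk_even (α : ℝ) (m : ℤ) : Kk α (-m) = Kk α m := by
  unfold Kk
  rw [abs_neg, zpow_neg, neg_one_zpow_inv]

lemma Kk_zero (α : ℝ) : Kk α 0 = 0 := by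
  unfold Kk; norm_num

lemma Kk_abs_le {α : ℝ} (hα : 1 ≤ α) (m : ℤ) : |Kk α m| ≤ 2 * (1 / (m : ℝ) ^ 2) := by
  rcases eq_or_ne m 0 with rfl | hm
  · simp [Kk_zero]
  · have hm1 : (1 : ℝ) ≤ ((|m| : ℤ) : ℝ) := by exact_mod_cast Int.one_le_abs hm
    have hm2 : (0 : ℝ) < (m : ℝ) ^ 2 := by
      have : (m : ℝ) ≠ 0 := Int.cast_ne_zero.mpr hm
      positivity
    have hden : ((m : ℝ)) ^ 2 ≤ ((|m| : ℤ) : ℝ) ^ (1 + α) := by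
      have h2 : ((|m| : ℤ) : ℝ) ^ ((2 : ℕ) : ℝ) ≤ ((|m| : ℤ) : ℝ) ^ (1 + α) :=
        Real.rpow_le_rpow_of_exponent_le hm1 (by push_cast; linarith)
      calc (m : ℝ) ^ 2 = ((|m| : ℤ) : ℝ) ^ (2 : ℕ) := by push_cast; rw [sq_abs]
        _ = ((|m| : ℤ) : ℝ) ^ ((2 : ℕ) : ℝ) := by rw [Real.rpow_natCast]
        _ ≤ _ := h2
    have hnum : |1 - (-1 : ℝ) ^ m| ≤ 2 := by
      have habs : |(-1 : ℝ) ^ m| = 1 := by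
        rcases Int.even_or_odd m with h | h
        · rw [h.neg_one_zpow, abs_one]
        · rw [h.neg_one_zpow, abs_neg, abs_one]
      calc |1 - (-1 : ℝ) ^ m| ≤ |(1 : ℝ)| + |(-1 : ℝ) ^ m| := abs_sub _ _
        _ = 2 := by rw [habs, abs_one]; norm_num
    have hKabs : |Kk α m| = |1 - (-1 : ℝ) ^ m| / ((|m| : ℤ) : ℝ) ^ (1 + α) := by
      rw [Kk, abs_div, abs_of_nonneg (Real.rpow_nonneg (by linarith) _)]
    rw [hKabs, mul_one_div]
    exact div_le_div₀ (by norm_num) hnum hm2 hden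

lemma Kk_abs_summable {α : ℝ} (hα : 1 ≤ α) : Summable fun m : ℤ => |Kk α m| :=
  Summable.of_nonneg_of_le (fun _ => abs_nonneg _) (Kk_abs_le hα)
    ((Real.summable_one_div_int_pow.mpr one_lt_two).mul_left 2)

lemma abs_mul_le_half (x y : ℝ) : |x * y| ≤ (x ^ 2 + y ^ 2) / 2 := by
  rw [abs_mul]
  nlinarith [sq_nonneg (|x| - |y|), sq_abs x, sq_abs y, abs_nonneg x, abs_nonneg y]

lemma summable_mul_abs {a b : ℤ → ℝ} (ha : Summable fun j => a j ^ 2)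
    (hb : Summable fun j => b j ^ 2) : Summable fun j => |a j * b j| :=
  Summable.of_nonneg_of_le (fun _ => abs_nonneg _) (fun j => abs_mul_le_half _ _)
    ((ha.add hb).div_const 2)

lemma summable_mul {a b : ℤ → ℝ} (ha : Summable fun j => a j ^ 2)
    (hb : Summable fun j => b j ^ 2) : Summable fun j => a j * b j :=
  (summable_mul_abs ha hb).of_abs

lemma sq_summable {u : ℤ → ℝ} (hu : Memℓp u 2) : Summable fun j : ℤ => u j ^ 2 := by
  have h := Memℓp.summable (by norm_num) hu
  refine h.congr fun j => ?_
  have h2 : (2 : ENNReal).toReal = (2 : ℝ) := by norm_num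
  rw [h2, Real.rpow_two, Real.norm_eq_abs, sq_abs]

/-- The shear equivalence `(j, m) ↦ (j, j - m)` of `ℤ × ℤ`; it is an involution. -/
def shearA : ℤ × ℤ ≃ ℤ × ℤ :=
  ⟨fun p => (p.1, p.1 - p.2), fun p => (p.1, p.1 - p.2),
   fun p => by
    obtain ⟨a, b⟩ := p
    show ((a, a - (a - b)) : ℤ × ℤ) = (a, b)
    simp only [Prod.mk.injEq]; exact ⟨trivial, by omega⟩,
   fun p => by
    obtain ⟨a, b⟩ := p
    show ((a, a - (a - b)) : ℤ × ℤ) = (a, b)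
    simp only [Prod.mk.injEq]; exact ⟨trivial, by omega⟩⟩

/-- Shift in the second coordinate `(j, k) ↦ (j, k + c)`. -/
def sndShift (c : ℤ) : ℤ × ℤ ≃ ℤ × ℤ :=
  ⟨fun p => (p.1, p.2 + c), fun p => (p.1, p.2 - c),
   fun p => by
    obtain ⟨a, b⟩ := p
    show ((a, b + c - c) : ℤ × ℤ) = (a, b)
    simp only [Prod.mk.injEq]; exact ⟨trivial, by omega⟩,
   fun p => by
    obtain ⟨a, b⟩ := p
    show ((a, b - c + c) : ℤ × ℤ) = (a, b)
    simp only [Prod.mk.injEq]; exact ⟨trivial, by omega⟩⟩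

/-- Shift in the second coordinate `(j, k) ↦ (j, k - c)`. -/
def sndSub (c : ℤ) : ℤ × ℤ ≃ ℤ × ℤ :=
  ⟨fun p => (p.1, p.2 - c), fun p => (p.1, p.2 + c),
   fun p => by
    obtain ⟨a, b⟩ := p
    show ((a, b - c + c) : ℤ × ℤ) = (a, b)
    simp only [Prod.mk.injEq]; exact ⟨trivial, by omega⟩,
   fun p => by
    obtain ⟨a, b⟩ := p
    show ((a, b + c - c) : ℤ × ℤ) = (a, b)
    simp only [Prod.mk.injEq]; exact ⟨trivial, by omega⟩⟩

lemma prodSummable {a b κ : ℤ → ℝ} (ha : Summable fun j => a j ^ 2)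
    (hb : Summable fun j => b j ^ 2) (hκ : Summable fun m => |κ m|) :
    Summable fun p : ℤ × ℤ => a p.1 * b p.2 * κ (p.1 - p.2) := by
  have hbs : ∀ m : ℤ, Summable fun j : ℤ => b (j - m) ^ 2 :=
    fun m => summable_sub_shift hb m
  have hbt : ∀ m : ℤ, ∑' j : ℤ, b (j - m) ^ 2 = ∑' j : ℤ, b j ^ 2 :=
    fun m => tsum_sub_shift (fun j => b j ^ 2) m
  have hGsum : Summable fun q : ℤ × ℤ => |κ q.1| * ((a q.2 ^ 2 + b (q.2 - q.1) ^ 2) / 2) := by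
    rw [summable_prod_of_nonneg (by intro q; positivity)]
    constructor
    · intro m
      exact (((ha.add (hbs m)).div_const 2).mul_left (|κ m|)).congr fun y => rfl
    · refine (hκ.mul_right ((∑' j : ℤ, a j ^ 2 + ∑' j : ℤ, b j ^ 2) / 2)).congr fun m => ?_
      have hy : ∑' (y : ℤ), |κ (m, y).1| * ((a (m, y).2 ^ 2 + b ((m, y).2 - (m, y).1) ^ 2) / 2)
          = ∑' (y : ℤ), |κ m| * ((a y ^ 2 + b (y - m) ^ 2) / 2) := tsum_congr fun y => rfl
      rw [hy, tsum_mul_left]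
      congr 1
      rw [tsum_div_const]
      congr 1
      rw [Summable.tsum_add ha (hbs m), hbt m]
  have key : Summable fun p : ℤ × ℤ => |a p.1 * b p.2 * κ (p.1 - p.2)| := by
    refine ((Equiv.prodComm ℤ ℤ).trans shearA).summable_iff
      (f := fun p : ℤ × ℤ => |a p.1 * b p.2 * κ (p.1 - p.2)|) |>.mp ?_
    refine Summable.of_nonneg_of_le (fun q => abs_nonneg _) (fun q => ?_) hGsum
    show |a q.2 * b (q.2 - q.1) * κ (q.2 - (q.2 - q.1))| ≤ _
    rw [sub_sub_cancel]
    calc |a q.2 * b (q.2 - q.1) * κ q.1|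
        = |a q.2 * b (q.2 - q.1)| * |κ q.1| := abs_mul _ _
      _ ≤ ((a q.2 ^ 2 + b (q.2 - q.1) ^ 2) / 2) * |κ q.1| :=
          mul_le_mul_of_nonneg_right (abs_mul_le_half _ _) (abs_nonneg _)
      _ = |κ q.1| * ((a q.2 ^ 2 + b (q.2 - q.1) ^ 2) / 2) := mul_comm _ _
  exact key.of_abs

lemma prodSummable' {h κ : ℤ → ℝ} (hh : Summable fun j => |h j|)
    (hκ : Summable fun m => |κ m|) :
    Summable fun p : ℤ × ℤ => h p.1 * κ (p.1 - p.2) := by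
  have hmul : Summable fun q : ℤ × ℤ => |h q.1| * |κ q.2| :=
    hh.mul_of_nonneg hκ (fun _ => abs_nonneg _) (fun _ => abs_nonneg _)
  have key : Summable fun p : ℤ × ℤ => |h p.1 * κ (p.1 - p.2)| := by
    refine shearA.summable_iff (f := fun p : ℤ × ℤ => |h p.1 * κ (p.1 - p.2)|) |>.mp ?_
    refine hmul.congr fun q => ?_
    show |h q.1| * |κ q.2| = |h q.1 * κ (q.1 - (q.1 - q.2))|
    rw [sub_sub_cancel, abs_mul]
  exact key.of_abs

end CNaux

open CNaux

/-- The Crank-Nicolson scheme is L²-conservative: ‖u^{n+1}‖ = ‖u^n‖. -/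
theorem crank_nicolson_L2_conservative (cα α dx dt : ℝ) (hcα : 0 < cα)
    (hα : α ∈ Set.Ico (1 : ℝ) 2) (hdx : 0 < dx) (hdt : 0 < dt)
    (un un1 : ℤ → ℝ) (hun : Memℓp un 2) (hun1 : Memℓp un1 2)
    (hscheme : ∀ j : ℤ,
      un1 j = un j
        - dt * (tilde (fun i => (un i + un1 i) / 2) j * Dc dx (fun i => (un i + un1 i) / 2) j)
        - dt * fracLap cα α dx (Dc dx (fun i => (un i + un1 i) / 2)) j) :
    Real.sqrt (dx * ∑' j : ℤ, (un1 j) ^ 2) = Real.sqrt (dx * ∑' j : ℤ, (un j) ^ 2) := by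
  obtain ⟨hα1, hα2⟩ := hα
  have hdx' : dx ≠ 0 := ne_of_gt hdx
  have hdt' : dt ≠ 0 := ne_of_gt hdt
  set w : ℤ → ℝ := fun i => (un i + un1 i) / 2 with hwdef
  set g : ℤ → ℝ := Dc dx w with hgdef
  -- basic summability
  have hun2 : Summable fun j : ℤ => un j ^ 2 := sq_summable hun
  have hun12 : Summable fun j : ℤ => un1 j ^ 2 := sq_summable hun1
  have hw2 : Summable fun j : ℤ => w j ^ 2 := by
    refine Summable.of_nonneg_of_le (fun j => sq_nonneg _) (fun j => ?_)
      ((hun2.add hun12).div_const 2)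
    show ((un j + un1 j) / 2) ^ 2 ≤ (un j ^ 2 + un1 j ^ 2) / 2
    nlinarith [sq_nonneg (un j - un1 j)]
  have hw2shift : ∀ c : ℤ, Summable fun j : ℤ => w (j + c) ^ 2 :=
    fun c => summable_shift hw2 c
  have hw2sub : ∀ c : ℤ, Summable fun j : ℤ => w (j - c) ^ 2 :=
    fun c => summable_sub_shift hw2 c
  have hg2 : Summable fun j : ℤ => g j ^ 2 := by
    refine Summable.of_nonneg_of_le (fun j => sq_nonneg _) (fun j => ?_)
      ((((hw2shift 1).mul_left 2).add ((hw2sub 1).mul_left 2)).div_const ((2 * dx) ^ 2))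
    show ((w (j + 1) - w (j - 1)) / (2 * dx)) ^ 2
        ≤ (2 * w (j + 1) ^ 2 + 2 * w (j - 1) ^ 2) / (2 * dx) ^ 2
    rw [div_pow]
    exact (div_le_div_iff_of_pos_right (by positivity)).mpr (by nlinarith [sq_nonneg (w (j + 1) + w (j - 1))])
  -- Part A : the convective term
  have hM : ∀ j : ℤ, |w j| ≤ Real.sqrt (∑' i : ℤ, w i ^ 2) := by
    intro j
    rw [← Real.sqrt_sq_eq_abs]
    exact Real.sqrt_le_sqrt (Summable.le_tsum hw2 j fun i _ => sq_nonneg _)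
  have hM0 : 0 ≤ Real.sqrt (∑' i : ℤ, w i ^ 2) := Real.sqrt_nonneg _
  set M := Real.sqrt (∑' i : ℤ, w i ^ 2) with hMdef
  set f : ℤ → ℝ := fun j => w j * w (j + 1) * (w j + w (j + 1)) with hfdef
  have hfsum : Summable f := by
    apply Summable.of_abs
    refine Summable.of_nonneg_of_le (fun j => abs_nonneg _) (fun j => ?_)
      ((hw2.add (hw2shift 1)).mul_left M)
    calc |f j| = |w j * w (j + 1)| * |w j + w (j + 1)| := abs_mul _ _
      _ ≤ ((w j ^ 2 + w (j + 1) ^ 2) / 2) * (2 * M) := by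
          refine mul_le_mul (abs_mul_le_half _ _) ?_ (abs_nonneg _) (by positivity)
          calc |w j + w (j + 1)| ≤ |w j| + |w (j + 1)| := abs_add_le _ _
            _ ≤ M + M := add_le_add (hM j) (hM (j + 1))
            _ = 2 * M := by ring
      _ = M * (w j ^ 2 + w (j + 1) ^ 2) := by ring
  have hfsub : Summable fun j : ℤ => f (j - 1) := summable_sub_shift hfsum 1
  have hAid : ∀ j : ℤ, w j * (tilde w j * g j) = (f j - f (j - 1)) / (6 * dx) := by
    intro j
    have h1 : j - 1 + 1 = j := by ring
    simp only [hfdef, hgdef, tilde, Dc, h1]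
    field_simp
    ring
  have hAsm : Summable fun j : ℤ => w j * (tilde w j * g j) :=
    ((hfsum.sub hfsub).div_const _).congr fun j => (hAid j).symm
  have hA : ∑' j : ℤ, w j * (tilde w j * g j) = 0 := by
    rw [tsum_congr hAid, tsum_div_const, Summable.tsum_sub hfsum hfsub, tsum_sub_shift f 1,
      sub_self, zero_div]
  -- Part B : the fractional dispersion term
  have hK : Summable fun m : ℤ => |Kk α m| := Kk_abs_summable hα1
  have hKs : Summable (Kk α) := hK.of_abs
  have hwg : Summable fun j : ℤ => |w j * g j| := summable_mul_abs hw2 hg2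
  have hF1 : Summable fun p : ℤ × ℤ => w p.1 * g p.2 * Kk α (p.1 - p.2) :=
    prodSummable (a := w) (b := g) (κ := Kk α) hw2 hg2 hK
  have hF2 : Summable fun p : ℤ × ℤ => w p.1 * g p.1 * Kk α (p.1 - p.2) :=
    (prodSummable' hwg hK).congr fun p => by ring
  -- ⟨w, D w⟩ = 0
  have hq1 : Summable fun j : ℤ => w j * w (j + 1) := summable_mul hw2 (hw2shift 1)
  have hq2 : Summable fun j : ℤ => w j * w (j - 1) := summable_mul hw2 (hw2sub 1)
  have hP : ∑' j : ℤ, w j * g j = 0 := by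
    have hgj : ∀ j : ℤ, w j * g j = (w j * w (j + 1) - w j * w (j - 1)) / (2 * dx) := by
      intro j; simp only [hgdef, Dc]; ring
    rw [tsum_congr hgj, tsum_div_const, Summable.tsum_sub hq1 hq2]
    have hsh : ∑' j : ℤ, w j * w (j - 1) = ∑' j : ℤ, w j * w (j + 1) := by
      calc ∑' j : ℤ, w j * w (j - 1) = ∑' j : ℤ, w (j - 1 + 1) * w (j - 1) := by
            refine tsum_congr fun j => ?_
            rw [show j - 1 + 1 = j from by ring, mul_comm]
        _ = ∑' j : ℤ, w (j + 1) * w j := tsum_sub_shift (fun j => w (j + 1) * w j) 1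
        _ = ∑' j : ℤ, w j * w (j + 1) := tsum_congr fun j => mul_comm _ _
    rw [hsh, sub_self, zero_div]
  -- the diagonal part of the double sum vanishes
  have hTF2 : ∑' p : ℤ × ℤ, w p.1 * g p.1 * Kk α (p.1 - p.2) = 0 := by
    have hsm : Summable fun q : ℤ × ℤ => w q.1 * g q.1 * Kk α q.2 := by
      have h' : Summable fun q : ℤ × ℤ => |w q.1 * g q.1| * |Kk α q.2| :=
        hwg.mul_of_nonneg hK (fun _ => abs_nonneg _) (fun _ => abs_nonneg _)
      exact (h'.congr fun q => (abs_mul _ _).symm).of_abs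
    have h1 : ∑' p : ℤ × ℤ, w p.1 * g p.1 * Kk α (p.1 - p.2)
        = ∑' q : ℤ × ℤ, w q.1 * g q.1 * Kk α q.2 := by
      rw [← shearA.tsum_eq (fun p : ℤ × ℤ => w p.1 * g p.1 * Kk α (p.1 - p.2))]
      refine tsum_congr fun q => ?_
      show w q.1 * g q.1 * Kk α (q.1 - (q.1 - q.2)) = _
      rw [sub_sub_cancel]
    rw [h1, Summable.tsum_prod' hsm (fun j => (hKs.mul_left (w j * g j)).congr fun m => rfl)]
    calc ∑' (j : ℤ), ∑' (m : ℤ), w j * g j * Kk α m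
        = ∑' j : ℤ, w j * g j * ∑' m : ℤ, Kk α m := tsum_congr fun j => tsum_mul_left
      _ = (∑' j : ℤ, w j * g j) * ∑' m : ℤ, Kk α m := tsum_mul_right
      _ = 0 := by rw [hP, zero_mul]
  -- the main part of the double sum vanishes by antisymmetry
  have hU1 : Summable fun p : ℤ × ℤ => w p.1 * w (p.2 + 1) * Kk α (p.1 - p.2) :=
    prodSummable (a := w) (b := fun j => w (j + 1)) (κ := Kk α) hw2 (hw2shift 1) hK
  have hU2 : Summable fun p : ℤ × ℤ => w p.1 * w (p.2 - 1) * Kk α (p.1 - p.2) :=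
    prodSummable (a := w) (b := fun j => w (j - 1)) (κ := Kk α) hw2 (hw2sub 1) hK
  have hTF1 : ∑' p : ℤ × ℤ, w p.1 * g p.2 * Kk α (p.1 - p.2) = 0 := by
    have hid : ∀ p : ℤ × ℤ, w p.1 * g p.2 * Kk α (p.1 - p.2)
        = w p.1 * w (p.2 + 1) * Kk α (p.1 - p.2) / (2 * dx)
          - w p.1 * w (p.2 - 1) * Kk α (p.1 - p.2) / (2 * dx) := by
      intro p; simp only [hgdef, Dc]; ring
    rw [tsum_congr hid, Summable.tsum_sub (hU1.div_const _) (hU2.div_const _), tsum_div_const,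
      tsum_div_const]
    have e1 : ∑' p : ℤ × ℤ, w p.1 * w (p.2 + 1) * Kk α (p.1 - p.2)
        = ∑' p : ℤ × ℤ, w p.1 * w p.2 * Kk α (p.1 - p.2 + 1) := by
      rw [← (sndSub 1).tsum_eq (fun p : ℤ × ℤ => w p.1 * w (p.2 + 1) * Kk α (p.1 - p.2))]
      refine tsum_congr fun p => ?_
      show w p.1 * w (p.2 - 1 + 1) * Kk α (p.1 - (p.2 - 1)) = _
      rw [show p.2 - 1 + 1 = p.2 from by ring, show p.1 - (p.2 - 1) = p.1 - p.2 + 1 from by ring]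
    have e2 : ∑' p : ℤ × ℤ, w p.1 * w (p.2 - 1) * Kk α (p.1 - p.2)
        = ∑' p : ℤ × ℤ, w p.1 * w p.2 * Kk α (p.1 - p.2 - 1) := by
      rw [← (sndShift 1).tsum_eq (fun p : ℤ × ℤ => w p.1 * w (p.2 - 1) * Kk α (p.1 - p.2))]
      refine tsum_congr fun p => ?_
      show w p.1 * w (p.2 + 1 - 1) * Kk α (p.1 - (p.2 + 1)) = _
      rw [show p.2 + 1 - 1 = p.2 from by ring, show p.1 - (p.2 + 1) = p.1 - p.2 - 1 from by ring]
    have e3 : ∑' p : ℤ × ℤ, w p.1 * w p.2 * Kk α (p.1 - p.2 - 1)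
        = ∑' p : ℤ × ℤ, w p.1 * w p.2 * Kk α (p.1 - p.2 + 1) := by
      rw [← (Equiv.prodComm ℤ ℤ).tsum_eq
        (fun p : ℤ × ℤ => w p.1 * w p.2 * Kk α (p.1 - p.2 - 1))]
      refine tsum_congr fun p => ?_
      show w p.2 * w p.1 * Kk α (p.2 - p.1 - 1) = _
      rw [show p.2 - p.1 - 1 = -(p.1 - p.2 + 1) from by ring, Kk_even]
      ring
    rw [e1, e2, e3, sub_self]
  -- rewriting the fracLap pairing via the kernel Kk
  set H : ℤ × ℤ → ℝ := fun p => w p.1 * ((g p.2 - g p.1) * Kk α (p.1 - p.2)) with hHdef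
  have hHsm : Summable H :=
    (hF1.sub hF2).congr fun p => by simp only [hHdef]; ring
  have hB1 : ∀ j : ℤ, w j * fracLap cα α dx g j
      = (cα / dx ^ α) * ∑' k : ℤ, H (j, k) := by
    intro j
    rw [fracLap]
    have hzero : (g j - g j) * (1 - (-1 : ℝ) ^ (j - j)) / ((|j - j| : ℤ) : ℝ) ^ (1 + α) = 0 := by
      rw [sub_self, zero_mul, zero_div]
    have hsub : (∑' k : {k : ℤ // k ≠ j},
        (g k - g j) * (1 - (-1 : ℝ) ^ (j - (k : ℤ))) / ((|(k : ℤ) - j| : ℤ) : ℝ) ^ (1 + α))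
        = ∑' k : ℤ, (g k - g j) * (1 - (-1 : ℝ) ^ (j - k)) / ((|k - j| : ℤ) : ℝ) ^ (1 + α) := by
      refine tsum_subtype_eq_of_support_subset
        (f := fun k : ℤ => (g k - g j) * (1 - (-1 : ℝ) ^ (j - k)) / ((|k - j| : ℤ) : ℝ) ^ (1 + α))
        (s := {k : ℤ | k ≠ j}) ?_
      intro x hx
      simp only [Function.mem_support] at hx
      intro hxj
      exact hx (by rw [hxj]; exact hzero)
    rw [hsub, show w j * ((cα / dx ^ α) *
        ∑' k : ℤ, (g k - g j) * (1 - (-1 : ℝ) ^ (j - k)) / ((|k - j| : ℤ) : ℝ) ^ (1 + α))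
      = (cα / dx ^ α) * (w j *
        ∑' k : ℤ, (g k - g j) * (1 - (-1 : ℝ) ^ (j - k)) / ((|k - j| : ℤ) : ℝ) ^ (1 + α))
      from by ring, ← tsum_mul_left]
    congr 1
    refine tsum_congr fun k => ?_
    show w j * ((g k - g j) * (1 - (-1 : ℝ) ^ (j - k)) / ((|k - j| : ℤ) : ℝ) ^ (1 + α))
        = w j * ((g k - g j) * Kk α (j - k))
    rw [Kk, abs_sub_comm k j]
    ring
  have hB : ∑' j : ℤ, w j * fracLap cα α dx g j = 0 := by
    rw [tsum_congr hB1, tsum_mul_left, ← Summable.tsum_prod' hHsm (fun b => hHsm.prod_factor b)]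
    have hsplit : ∑' p : ℤ × ℤ, H p
        = ∑' p : ℤ × ℤ, (w p.1 * g p.2 * Kk α (p.1 - p.2)
            - w p.1 * g p.1 * Kk α (p.1 - p.2)) :=
      tsum_congr fun p => by simp only [hHdef]; ring
    rw [hsplit, Summable.tsum_sub hF1 hF2, hTF1, hTF2, sub_self, mul_zero]
  -- assembling
  have hd2 : Summable fun j : ℤ => (un1 j - un j) ^ 2 := by
    refine Summable.of_nonneg_of_le (fun j => sq_nonneg _) (fun j => ?_)
      ((hun12.mul_left 2).add (hun2.mul_left 2))
    nlinarith [sq_nonneg (un1 j + un j)]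
  have hwd : Summable fun j : ℤ => w j * (un1 j - un j) := summable_mul hw2 hd2
  have hwBsm : Summable fun j : ℤ => w j * fracLap cα α dx g j := by
    have hid : ∀ j : ℤ, w j * fracLap cα α dx g j
        = -(w j * (un1 j - un j)) / dt - w j * (tilde w j * g j) := by
      intro j
      have h' : fracLap cα α dx g j = (un j - un1 j) / dt - tilde w j * g j := by
        field_simp
        linarith [hscheme j]
      rw [h']
      field_simp
      ring
    exact ((hwd.neg.div_const dt).sub hAsm).congr fun j => (hid j).symm
  have hsum0 : ∑' j : ℤ, w j * (un1 j - un j) = 0 := by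
    have hid2 : ∀ j : ℤ, w j * (un1 j - un j)
        = -dt * (w j * (tilde w j * g j)) + -dt * (w j * fracLap cα α dx g j) := by
      intro j
      have h3 : un1 j - un j = -dt * (tilde w j * g j) + -dt * fracLap cα α dx g j := by
        linarith [hscheme j]
      rw [h3]; ring
    rw [tsum_congr hid2, Summable.tsum_add (hAsm.mul_left _) (hwBsm.mul_left _), tsum_mul_left,
      tsum_mul_left, hA, hB]
    ring
  have hfinal : ∑' j : ℤ, un1 j ^ 2 = ∑' j : ℤ, un j ^ 2 := by
    have hid3 : ∀ j : ℤ, un1 j ^ 2 - un j ^ 2 = 2 * (w j * (un1 j - un j)) := by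
      intro j
      show _ = 2 * ((un j + un1 j) / 2 * (un1 j - un j))
      ring
    have h4 : ∑' j : ℤ, (un1 j ^ 2 - un j ^ 2) = 0 := by
      rw [tsum_congr hid3, tsum_mul_left, hsum0, mul_zero]
    have h5 := Summable.tsum_sub hun12 hun2
    rw [h4] at h5
    linarith
  rw [hfinal]
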